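/- Let k ∈ ℕ, let β = (β_{ij})_{i,j ≥ 0, i+j ≤ 2k} be a bivariate truncated moment sequence of degree 2k, and let φ(x,y) = (a + bx + cy, d' + ex + fy) be an invertible affine map (bf − ce ≠ 0) with transformed sequence β̃ defined by β̃_{ij} := L_β(φ₁(x,y)^i φ₂(x,y)^j). Then M(k)(β) is positive semidefinite if and only if M(k)(β̃) is positive semidefinite, and rank M(k)(β) = rank M(k)(β̃). -/

import Mathlib

set_option maxHeartbeats 1000000

open Matrix

noncomputable section

/-- Index type for monomials `x^i y^j` with `i + j ≤ k`. -/
abbrev MIdx (k : ℕ) : Type := {p : Fin (k+1) × Fin (k+1) // (p.1 : ℕ) + (p.2 : ℕ) ≤ k}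

/-- The moment matrix `M(k)` of a bivariate truncated moment sequence `β`. -/
def momentMatrix (k : ℕ) (β : ℕ → ℕ → ℝ) : Matrix (MIdx k) (MIdx k) ℝ :=
  fun p q => β ((p.1.1 : ℕ) + (q.1.1 : ℕ)) ((p.1.2 : ℕ) + (q.1.2 : ℕ))

/-- The Riesz functional `L_β` of `β`, sending `Σ a_{ij} x^i y^j` to `Σ a_{ij} β_{ij}`. -/
def riesz (β : ℕ → ℕ → ℝ) (p : MvPolynomial (Fin 2) ℝ) : ℝ :=
  ∑ m ∈ p.support, p.coeff m * β (m 0) (m 1)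

namespace AffInvAux

open MvPolynomial

/-- exponent finsupp of the monomial `x^i y^j` -/
def mexp (i j : ℕ) : Fin 2 →₀ ℕ := Finsupp.single 0 i + Finsupp.single 1 j

@[simp] lemma mexp_apply0 (i j : ℕ) : mexp i j 0 = i := by simp [mexp, Finsupp.single_apply]
@[simp] lemma mexp_apply1 (i j : ℕ) : mexp i j 1 = j := by simp [mexp, Finsupp.single_apply]

lemma eq_mexp (m : Fin 2 →₀ ℕ) : m = mexp (m 0) (m 1) := by ext i; fin_cases i <;> simp

lemma msum (m : Fin 2 →₀ ℕ) : (∑ i ∈ m.support, m i) = m 0 + m 1 := by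
  rw [Finset.sum_subset (Finset.subset_univ m.support)]
  · rw [Fin.sum_univ_two]
  · intro x _ hx; simpa using Finsupp.notMem_support_iff.mp hx

lemma riesz_eq_sum (β : ℕ → ℕ → ℝ) (p : MvPolynomial (Fin 2) ℝ)
    {S : Finset (Fin 2 →₀ ℕ)} (hS : p.support ⊆ S) :
    riesz β p = ∑ m ∈ S, p.coeff m * β (m 0) (m 1) := by
  unfold riesz
  apply Finset.sum_subset hS
  intro m _ hm
  simp [MvPolynomial.notMem_support_iff.mp hm]

lemma riesz_add (β : ℕ → ℕ → ℝ) (p q : MvPolynomial (Fin 2) ℝ) :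
    riesz β (p + q) = riesz β p + riesz β q := by
  rw [riesz_eq_sum β (p + q) (S := p.support ∪ q.support) MvPolynomial.support_add,
    riesz_eq_sum β p Finset.subset_union_left,
    riesz_eq_sum β q Finset.subset_union_right, ← Finset.sum_add_distrib]
  apply Finset.sum_congr rfl
  intro m _
  rw [MvPolynomial.coeff_add]
  ring

lemma riesz_zero (β : ℕ → ℕ → ℝ) : riesz β 0 = 0 := by simp [riesz]

/-- `riesz β` bundled as an additive monoid hom. -/
def rieszHom (β : ℕ → ℕ → ℝ) : MvPolynomial (Fin 2) ℝ →+ ℝ :=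
  ⟨⟨riesz β, riesz_zero β⟩, riesz_add β⟩

lemma riesz_monomial (β : ℕ → ℕ → ℝ) (m : Fin 2 →₀ ℕ) (c : ℝ) :
    riesz β (monomial m c) = c * β (m 0) (m 1) := by
  by_cases hc : c = 0
  · simp [hc, riesz]
  · simp [riesz, MvPolynomial.support_monomial, hc, MvPolynomial.coeff_monomial]

lemma mexp_inj {i j i' j' : ℕ} (h : mexp i j = mexp i' j') : i = i' ∧ j = j' := by
  constructor
  · have h0 := congrArg (fun f : Fin 2 →₀ ℕ => f 0) h
    simpa using h0
  · have h1 := congrArg (fun f : Fin 2 →₀ ℕ => f 1) h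
    simpa using h1

lemma decomp {k : ℕ} {g : MvPolynomial (Fin 2) ℝ} (hg : g.totalDegree ≤ k) :
    g = ∑ q : MIdx k, monomial (mexp q.1.1 q.1.2) (g.coeff (mexp q.1.1 q.1.2)) := by
  ext m
  rw [MvPolynomial.coeff_sum]
  simp only [MvPolynomial.coeff_monomial]
  by_cases hm : (m 0) + (m 1) ≤ k
  · have h0 : (m 0) ≤ k := le_trans (Nat.le_add_right _ _) hm
    have h1 : (m 1) ≤ k := le_trans (Nat.le_add_left _ _) hm
    set q0 : MIdx k := ⟨(⟨m 0, Nat.lt_succ_of_le h0⟩, ⟨m 1, Nat.lt_succ_of_le h1⟩), hm⟩ with hq0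
    have hme : mexp ((q0.1.1 : ℕ)) ((q0.1.2 : ℕ)) = m := (eq_mexp m).symm
    rw [Finset.sum_eq_single q0]
    · rw [if_pos hme, hme]
    · intro q _ hq
      rw [if_neg]
      intro hEq
      apply hq
      have h0' : (q.1.1 : ℕ) = m 0 := by rw [← hEq]; simp
      have h1' : (q.1.2 : ℕ) = m 1 := by rw [← hEq]; simp
      apply Subtype.ext
      apply Prod.ext <;> apply Fin.ext <;> simp [hq0, h0', h1']
    · intro h; exact absurd (Finset.mem_univ q0) h
  · rw [MvPolynomial.coeff_eq_zero_of_totalDegree_lt, Finset.sum_eq_zero]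
    · intro q _
      rw [if_neg]
      intro hEq
      apply hm
      have h0' : m 0 = (q.1.1 : ℕ) := by rw [← hEq]; simp
      have h1' : m 1 = (q.1.2 : ℕ) := by rw [← hEq]; simp
      rw [h0', h1']; exact q.2
    · rw [msum]; omega

lemma tdeg_affine (u v w : ℝ) :
    (C u + C v * X 0 + C w * X 1 : MvPolynomial (Fin 2) ℝ).totalDegree ≤ 1 := by
  apply le_trans (totalDegree_add _ _)
  apply max_le
  · apply le_trans (totalDegree_add _ _)
    apply max_le
    · simp [totalDegree_C]
    · exact le_trans (totalDegree_mul _ _) (by simp)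
  · exact le_trans (totalDegree_mul _ _) (by simp)

lemma tdeg_F {g1 g2 : MvPolynomial (Fin 2) ℝ} (h1 : g1.totalDegree ≤ 1)
    (h2 : g2.totalDegree ≤ 1) (i j : ℕ) : (g1 ^ i * g2 ^ j).totalDegree ≤ i + j := by
  refine le_trans (totalDegree_mul _ _) (add_le_add ?_ ?_)
  · refine le_trans (totalDegree_pow _ _) ?_
    calc i * g1.totalDegree ≤ i * 1 := Nat.mul_le_mul_left i h1
      _ = i := Nat.mul_one i
  · refine le_trans (totalDegree_pow _ _) ?_
    calc j * g2.totalDegree ≤ j * 1 := Nat.mul_le_mul_left j h2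
      _ = j := Nat.mul_one j

lemma prod_fin2 (m : Fin 2 →₀ ℕ) (G : Fin 2 → MvPolynomial (Fin 2) ℝ) :
    (m.prod fun i n => G i ^ n) = G 0 ^ (m 0) * G 1 ^ (m 1) := by
  rw [Finsupp.prod_fintype]
  · rw [Fin.prod_univ_two]
  · intro i; exact pow_zero _

/-- Expansion of `riesz β (g * h)` for polynomials of total degree at most `k`. -/
lemma riesz_mul (k : ℕ) (β : ℕ → ℕ → ℝ) {g h : MvPolynomial (Fin 2) ℝ}
    (hg : g.totalDegree ≤ k) (hh : h.totalDegree ≤ k) :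
    riesz β (g * h) = ∑ q : MIdx k, ∑ q' : MIdx k,
      g.coeff (mexp q.1.1 q.1.2) * h.coeff (mexp q'.1.1 q'.1.2) *
        β ((q.1.1 : ℕ) + (q'.1.1 : ℕ)) ((q.1.2 : ℕ) + (q'.1.2 : ℕ)) := by
  conv_lhs => rw [decomp hg, decomp hh]
  rw [Finset.sum_mul_sum]
  rw [show riesz β = ⇑(rieszHom β) from rfl, map_sum]
  apply Finset.sum_congr rfl
  intro q _
  rw [map_sum]
  apply Finset.sum_congr rfl
  intro q' _
  show riesz β _ = _
  rw [MvPolynomial.monomial_mul, riesz_monomial]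
  simp [Finsupp.add_apply]

/-- Transition matrix: column `p` holds the coefficients of `g1^{p₁} g2^{p₂}`. -/
def tmat (k : ℕ) (g1 g2 : MvPolynomial (Fin 2) ℝ) : Matrix (MIdx k) (MIdx k) ℝ :=
  fun q p => (g1 ^ (p.1.1 : ℕ) * g2 ^ (p.1.2 : ℕ)).coeff (mexp q.1.1 q.1.2)

lemma aeval_affine (g1 g2 : MvPolynomial (Fin 2) ℝ) (u v w : ℝ) :
    MvPolynomial.aeval ![g1, g2] (C u + C v * X 0 + C w * X 1) =
      C u + C v * g1 + C w * g2 := by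
  simp [MvPolynomial.algebraMap_eq]

lemma expand_affine (a b c d' e f u v w : ℝ) :
    C u + C v * (C a + C b * X 0 + C c * X 1) + C w * (C d' + C e * X 0 + C f * X 1) =
      (C (u + v * a + w * d') + C (v * b + w * e) * X 0 + C (v * c + w * f) * X 1 :
        MvPolynomial (Fin 2) ℝ) := by
  simp only [_root_.map_add, _root_.map_mul]
  ring

/-- If composing `(h1, h2)` with `(g1, g2)` gives the identity, the transition matrices
multiply to the identity. -/
lemma tmat_mul_eq_one (k : ℕ) (g1 g2 h1 h2 : MvPolynomial (Fin 2) ℝ)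
    (hh1 : h1.totalDegree ≤ 1) (hh2 : h2.totalDegree ≤ 1)
    (hc1 : MvPolynomial.aeval ![g1, g2] h1 = X 0)
    (hc2 : MvPolynomial.aeval ![g1, g2] h2 = X 1) :
    tmat k g1 g2 * tmat k h1 h2 = 1 := by
  ext q p
  rw [Matrix.mul_apply]
  have hH : (h1 ^ (p.1.1 : ℕ) * h2 ^ (p.1.2 : ℕ)).totalDegree ≤ k :=
    le_trans (tdeg_F hh1 hh2 _ _) p.2
  have key : MvPolynomial.aeval ![g1, g2] (h1 ^ (p.1.1 : ℕ) * h2 ^ (p.1.2 : ℕ)) =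
      X 0 ^ (p.1.1 : ℕ) * X 1 ^ (p.1.2 : ℕ) := by
    rw [_root_.map_mul, map_pow, map_pow, hc1, hc2]
  have key2 : MvPolynomial.aeval ![g1, g2] (h1 ^ (p.1.1 : ℕ) * h2 ^ (p.1.2 : ℕ)) =
      ∑ s : MIdx k, C ((h1 ^ (p.1.1 : ℕ) * h2 ^ (p.1.2 : ℕ)).coeff (mexp s.1.1 s.1.2)) *
        (g1 ^ (s.1.1 : ℕ) * g2 ^ (s.1.2 : ℕ)) := by
    conv_lhs => rw [decomp hH]
    rw [map_sum]
    apply Finset.sum_congr rfl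
    intro s _
    rw [MvPolynomial.aeval_monomial, prod_fin2]
    simp [MvPolynomial.algebraMap_eq]
  have := congrArg (fun P : MvPolynomial (Fin 2) ℝ => P.coeff (mexp q.1.1 q.1.2))
    (key2.symm.trans key)
  simp only [MvPolynomial.coeff_sum] at this
  calc (∑ s : MIdx k, tmat k g1 g2 q s * tmat k h1 h2 s p)
      = ∑ s : MIdx k, (C ((h1 ^ (p.1.1 : ℕ) * h2 ^ (p.1.2 : ℕ)).coeff (mexp s.1.1 s.1.2)) *
          (g1 ^ (s.1.1 : ℕ) * g2 ^ (s.1.2 : ℕ))).coeff (mexp q.1.1 q.1.2) := by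
        apply Finset.sum_congr rfl
        intro s _
        rw [MvPolynomial.coeff_C_mul]
        simp [tmat, mul_comm]
    _ = (X 0 ^ (p.1.1 : ℕ) * X 1 ^ (p.1.2 : ℕ) : MvPolynomial (Fin 2) ℝ).coeff
          (mexp q.1.1 q.1.2) := this
    _ = (1 : Matrix (MIdx k) (MIdx k) ℝ) q p := by
        rw [MvPolynomial.X_pow_eq_monomial, MvPolynomial.X_pow_eq_monomial,
          MvPolynomial.monomial_mul, one_mul]
        have hmm : Finsupp.single (0 : Fin 2) (p.1.1 : ℕ) + Finsupp.single 1 (p.1.2 : ℕ) =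
            mexp p.1.1 p.1.2 := rfl
        rw [hmm, MvPolynomial.coeff_monomial, Matrix.one_apply]
        by_cases hqp : q = p
        · rw [if_pos (by rw [hqp]), if_pos hqp]
        · rw [if_neg, if_neg hqp]
          intro hEq
          apply hqp
          obtain ⟨h0, h1⟩ := mexp_inj hEq
          apply Subtype.ext
          apply Prod.ext <;> apply Fin.ext <;> simp [h0, h1]

end AffInvAux


open AffInvAux in
/-- For an invertible affine map `φ(x,y) = (a + bx + cy, d' + ex + fy)`
with transformed sequence `β̃_{ij} = L_β(φ₁^i φ₂^j)`: `M(k)(β)` is positive semidefinite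
iff `M(k)(β̃)` is, and `rank M(k)(β) = rank M(k)(β̃)`. -/
theorem affine_invariance_momentMatrix (k : ℕ) (β : ℕ → ℕ → ℝ)
    (a b c d' e f : ℝ) (hdet : b * f - c * e ≠ 0) :
    ((momentMatrix k β).PosSemidef ↔
      (momentMatrix k (fun i j => riesz β
        ((MvPolynomial.C a + MvPolynomial.C b * MvPolynomial.X 0 +
            MvPolynomial.C c * MvPolynomial.X 1) ^ i *
         (MvPolynomial.C d' + MvPolynomial.C e * MvPolynomial.X 0 +
            MvPolynomial.C f * MvPolynomial.X 1) ^ j))).PosSemidef) ∧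
    (momentMatrix k β).rank =
      (momentMatrix k (fun i j => riesz β
        ((MvPolynomial.C a + MvPolynomial.C b * MvPolynomial.X 0 +
            MvPolynomial.C c * MvPolynomial.X 1) ^ i *
         (MvPolynomial.C d' + MvPolynomial.C e * MvPolynomial.X 0 +
            MvPolynomial.C f * MvPolynomial.X 1) ^ j))).rank := by
  classical
  open MvPolynomial in
  set φ1 : MvPolynomial (Fin 2) ℝ := MvPolynomial.C a + MvPolynomial.C b * MvPolynomial.X 0 +
    MvPolynomial.C c * MvPolynomial.X 1 with hφ1
  set φ2 : MvPolynomial (Fin 2) ℝ := MvPolynomial.C d' + MvPolynomial.C e * MvPolynomial.X 0 +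
    MvPolynomial.C f * MvPolynomial.X 1 with hφ2
  set ψ1 : MvPolynomial (Fin 2) ℝ := MvPolynomial.C ((c * d' - a * f) / (b * f - c * e)) +
    MvPolynomial.C (f / (b * f - c * e)) * MvPolynomial.X 0 + MvPolynomial.C (-c / (b * f - c * e)) * MvPolynomial.X 1 with hψ1
  set ψ2 : MvPolynomial (Fin 2) ℝ := MvPolynomial.C ((e * a - b * d') / (b * f - c * e)) +
    MvPolynomial.C (-e / (b * f - c * e)) * MvPolynomial.X 0 + MvPolynomial.C (b / (b * f - c * e)) * MvPolynomial.X 1 with hψ2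
  have hc1 : MvPolynomial.aeval ![φ1, φ2] ψ1 = MvPolynomial.X 0 := by
    rw [hψ1, aeval_affine, hφ1, hφ2, expand_affine,
      show (c * d' - a * f) / (b * f - c * e) + f / (b * f - c * e) * a + -c / (b * f - c * e) * d' = 0 by field_simp; ring,
      show f / (b * f - c * e) * b + -c / (b * f - c * e) * e = 1 by rw [div_mul_eq_mul_div, div_mul_eq_mul_div, ← add_div, div_eq_one_iff_eq hdet]; ring,
      show f / (b * f - c * e) * c + -c / (b * f - c * e) * f = 0 by field_simp; ring]
    simp
  have hc2 : MvPolynomial.aeval ![φ1, φ2] ψ2 = MvPolynomial.X 1 := by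
    rw [hψ2, aeval_affine, hφ1, hφ2, expand_affine,
      show (e * a - b * d') / (b * f - c * e) + -e / (b * f - c * e) * a + b / (b * f - c * e) * d' = 0 by field_simp; ring,
      show -e / (b * f - c * e) * b + b / (b * f - c * e) * e = 0 by field_simp; ring,
      show -e / (b * f - c * e) * c + b / (b * f - c * e) * f = 1 by rw [div_mul_eq_mul_div, div_mul_eq_mul_div, ← add_div, div_eq_one_iff_eq hdet]; ring]
    simp
  have hc3 : MvPolynomial.aeval ![ψ1, ψ2] φ1 = MvPolynomial.X 0 := by
    rw [hφ1, aeval_affine, hψ1, hψ2, expand_affine,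
      show a + b * ((c * d' - a * f) / (b * f - c * e)) + c * ((e * a - b * d') / (b * f - c * e)) = 0 by field_simp; ring,
      show b * (f / (b * f - c * e)) + c * (-e / (b * f - c * e)) = 1 by field_simp; ring,
      show b * (-c / (b * f - c * e)) + c * (b / (b * f - c * e)) = 0 by field_simp; ring]
    simp
  have hc4 : MvPolynomial.aeval ![ψ1, ψ2] φ2 = MvPolynomial.X 1 := by
    rw [hφ2, aeval_affine, hψ1, hψ2, expand_affine,
      show d' + e * ((c * d' - a * f) / (b * f - c * e)) + f * ((e * a - b * d') / (b * f - c * e)) = 0 by rw [← mul_div_assoc, ← mul_div_assoc, add_assoc, ← add_div, add_div' _ _ _ hdet, div_eq_zero_iff]; left; ring,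
      show e * (f / (b * f - c * e)) + f * (-e / (b * f - c * e)) = 0 by field_simp; ring,
      show e * (-c / (b * f - c * e)) + f * (b / (b * f - c * e)) = 1 by rw [← mul_div_assoc, ← mul_div_assoc, ← add_div, div_eq_one_iff_eq hdet]; ring]
    simp
  have tdφ1 : φ1.totalDegree ≤ 1 := tdeg_affine a b c
  have tdφ2 : φ2.totalDegree ≤ 1 := tdeg_affine d' e f
  have tdψ1 : ψ1.totalDegree ≤ 1 := tdeg_affine _ _ _
  have tdψ2 : ψ2.totalDegree ≤ 1 := tdeg_affine _ _ _
  set A : Matrix (MIdx k) (MIdx k) ℝ := tmat k φ1 φ2 with hA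
  set B : Matrix (MIdx k) (MIdx k) ℝ := tmat k ψ1 ψ2 with hB
  have hAB : A * B = 1 := tmat_mul_eq_one k φ1 φ2 ψ1 ψ2 tdψ1 tdψ2 hc1 hc2
  have hBA : B * A = 1 := tmat_mul_eq_one k ψ1 ψ2 φ1 φ2 tdφ1 tdφ2 hc3 hc4
  have hdetA : IsUnit A.det :=
    IsUnit.of_mul_eq_one B.det (by rw [← Matrix.det_mul, hAB, Matrix.det_one])
  have hdetAT : IsUnit Aᵀ.det := by rwa [Matrix.det_transpose]
  set M : Matrix (MIdx k) (MIdx k) ℝ := momentMatrix k β with hM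
  have hMt : momentMatrix k (fun i j => riesz β (φ1 ^ i * φ2 ^ j)) = Aᵀ * M * A := by
    ext p p'
    show riesz β (φ1 ^ ((p.1.1 : ℕ) + (p'.1.1 : ℕ)) * φ2 ^ ((p.1.2 : ℕ) + (p'.1.2 : ℕ))) = _
    have hre : φ1 ^ ((p.1.1 : ℕ) + (p'.1.1 : ℕ)) * φ2 ^ ((p.1.2 : ℕ) + (p'.1.2 : ℕ)) =
        (φ1 ^ (p.1.1 : ℕ) * φ2 ^ (p.1.2 : ℕ)) * (φ1 ^ (p'.1.1 : ℕ) * φ2 ^ (p'.1.2 : ℕ)) := by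
      rw [pow_add, pow_add]; ring
    rw [hre, riesz_mul k β (le_trans (tdeg_F tdφ1 tdφ2 _ _) p.2)
      (le_trans (tdeg_F tdφ1 tdφ2 _ _) p'.2)]
    simp only [Matrix.mul_apply, Matrix.transpose_apply, Finset.sum_mul]
    rw [Finset.sum_comm]
    apply Finset.sum_congr rfl
    intro q' _
    apply Finset.sum_congr rfl
    intro q _
    show _ = A q p * M q q' * A q' p'
    rw [hA, hM]
    show _ = (φ1 ^ (p.1.1 : ℕ) * φ2 ^ (p.1.2 : ℕ)).coeff (mexp q.1.1 q.1.2) *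
      β ((q.1.1 : ℕ) + (q'.1.1 : ℕ)) ((q.1.2 : ℕ) + (q'.1.2 : ℕ)) *
      (φ1 ^ (p'.1.1 : ℕ) * φ2 ^ (p'.1.2 : ℕ)).coeff (mexp q'.1.1 q'.1.2)
    ring
  have hTA : Aᴴ = Aᵀ := by ext i j; simp [Matrix.conjTranspose_apply]
  have hTB : Bᴴ = Bᵀ := by ext i j; simp [Matrix.conjTranspose_apply]
  have hMb : Bᵀ * (Aᵀ * M * A) * B = M := by
    calc Bᵀ * (Aᵀ * M * A) * B = (A * B)ᵀ * M * (A * B) := by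
          rw [Matrix.transpose_mul]; simp only [Matrix.mul_assoc]
      _ = M := by rw [hAB]; simp
  refine ⟨⟨fun hPSD => ?_, fun hPSD => ?_⟩, ?_⟩
  · rw [hMt, ← hTA]
    exact hPSD.conjTranspose_mul_mul_same A
  · rw [hMt] at hPSD
    have := hPSD.conjTranspose_mul_mul_same B
    rw [hTB, hMb] at this
    exact this
  · rw [hMt, Matrix.mul_assoc, Matrix.rank_mul_eq_right_of_isUnit_det _ _ hdetAT,
      Matrix.rank_mul_eq_left_of_isUnit_det _ _ hdetA]

end
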